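/- Let f : ℝᵈ → ℝ be differentiable with L-Lipschitz gradient, h : ℝᵈ → ℝ convex, Φ = f + h, η > 0, and v ∈ ℝᵈ. Let x⁺ = prox_{ηh}(x - ηv). Then for every z ∈ ℝᵈ: Φ(x⁺) ≤ Φ(z) + ⟨∇f(x) - v, x⁺ - z⟩ - (1/η)⟨x⁺ - x, x⁺ - z⟩ + (L/2)‖x⁺ - x‖² + (L/2)‖z - x‖². -/

import Mathlib

open scoped RealInnerProductSpace
open intervalIntegral

lemma descent_aux {d : ℕ} (f : EuclideanSpace ℝ (Fin d) → ℝ)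
    (f' : EuclideanSpace ℝ (Fin d) → EuclideanSpace ℝ (Fin d)) (L : ℝ)
    (hdiff : ∀ x, HasGradientAt f (f' x) x)
    (hLip : ∀ x y, ‖f' x - f' y‖ ≤ L * ‖x - y‖) (x y : EuclideanSpace ℝ (Fin d)) :
    |f y - f x - ⟪f' x, y - x⟫| ≤ L / 2 * ‖y - x‖ ^ 2 := by
  set u : EuclideanSpace ℝ (Fin d) := y - x with hu
  by_cases hu0 : u = 0
  · have hyx : y = x := by rwa [hu, sub_eq_zero] at hu0
    simp [hyx, hu0, hu]
  have hL : 0 ≤ L := by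
    have h1 := hLip y x
    have h2 : (0:ℝ) < ‖y - x‖ := by rwa [norm_pos_iff, ← hu]
    nlinarith [norm_nonneg (f' y - f' x)]
  set c : ℝ → EuclideanSpace ℝ (Fin d) := fun t => x + t • u with hc
  have hcder : ∀ t : ℝ, HasDerivAt c u t := fun t =>
    by rw [hc]; simpa using ((hasDerivAt_id t).smul_const u).const_add x
  set g' : ℝ → ℝ := fun t => ⟪f' (c t), u⟫ with hg'
  have hgder : ∀ t : ℝ, HasDerivAt (fun s => f (c s)) (g' t) t := by
    intro t
    have := (hdiff (c t)).hasFDerivAt.comp_hasDerivAt t (hcder t)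
    exact this
  -- continuity of f'
  have hf'cont : Continuous f' := by
    rcases eq_or_lt_of_le hL with hL0 | hLpos
    · have : ∀ a b, f' a = f' b := by
        intro a b
        have := hLip a b
        rw [← hL0] at this
        have h0 : ‖f' a - f' b‖ ≤ 0 := by simpa using this
        rw [← sub_eq_zero]
        simpa using le_antisymm h0 (norm_nonneg _)
      exact continuous_const.congr fun a => (this x a)
    · exact (LipschitzWith.of_dist_le_mul (K := ⟨L, hL⟩) (by
        intro a b; rw [dist_eq_norm, dist_eq_norm]; exact hLip a b)).continuous
  have hg'cont : Continuous g' := by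
    exact (hf'cont.comp (by fun_prop)).inner continuous_const
  have hint : ∫ t in (0:ℝ)..1, g' t = f (c 1) - f (c 0) :=
    integral_eq_sub_of_hasDerivAt (fun t _ => hgder t)
      (hg'cont.intervalIntegrable 0 1)
  have hc0 : c 0 = x := by simp [hc]
  have hc1 : c 1 = y := by simp [hc, hu]
  have key : f y - f x - ⟪f' x, u⟫ = ∫ t in (0:ℝ)..1, (g' t - g' 0) := by
    rw [intervalIntegral.integral_sub (hg'cont.intervalIntegrable 0 1)
      (intervalIntegrable_const), hint, hc0, hc1]
    simp [hg', hc]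
  have hbound : ∀ t ∈ Set.uIoc (0:ℝ) 1, ‖g' t - g' 0‖ ≤ L * ‖u‖ ^ 2 * t := by
    intro t ht
    rw [Set.uIoc_of_le (by norm_num)] at ht
    have h1 : g' t - g' 0 = ⟪f' (c t) - f' (c 0), u⟫ := by
      simp [hg', inner_sub_left]
    rw [h1, Real.norm_eq_abs]
    calc |⟪f' (c t) - f' (c 0), u⟫| ≤ ‖f' (c t) - f' (c 0)‖ * ‖u‖ :=
          abs_real_inner_le_norm _ _
      _ ≤ (L * ‖c t - c 0‖) * ‖u‖ := by
          have := hLip (c t) (c 0); nlinarith [norm_nonneg u]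
      _ = L * ‖u‖ ^ 2 * t := by
          have : c t - c 0 = t • u := by simp [hc]
          rw [this, norm_smul]
          simp [abs_of_nonneg ht.1.le]; ring
  have habs : ‖∫ t in (0:ℝ)..1, (g' t - g' 0)‖ ≤ |∫ t in (0:ℝ)..1, L * ‖u‖ ^ 2 * t| := by
    apply intervalIntegral.norm_integral_le_abs_of_norm_le
    · exact (MeasureTheory.ae_restrict_iff' measurableSet_uIoc).2
        (Filter.Eventually.of_forall hbound)
    · exact (by fun_prop : Continuous fun t : ℝ => L * ‖u‖ ^ 2 * t).intervalIntegrable 0 1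
  have hval : ∫ t in (0:ℝ)..1, L * ‖u‖ ^ 2 * t = L / 2 * ‖u‖ ^ 2 := by
    rw [intervalIntegral.integral_const_mul, integral_id]
    ring
  rw [hval, Real.norm_eq_abs, ← key,
    abs_of_nonneg (by positivity : (0:ℝ) ≤ L / 2 * ‖u‖ ^ 2)] at habs
  simpa [hu] using habs

lemma prox_aux {d : ℕ} (h : EuclideanSpace ℝ (Fin d) → ℝ)
    (hconv : ConvexOn ℝ Set.univ h)
    (η : ℝ) (hη : 0 < η) (u xplus z : EuclideanSpace ℝ (Fin d))
    (hmin : ∀ y : EuclideanSpace ℝ (Fin d),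
      h xplus + (1 / (2 * η)) * ‖xplus - u‖ ^ 2 ≤
        h y + (1 / (2 * η)) * ‖y - u‖ ^ 2) :
    h xplus ≤ h z + (1 / η) * ⟪xplus - u, z - xplus⟫ := by
  set c : ℝ := 1 / (2 * η) with hcdef
  have hc : 0 < c := by positivity
  set D : EuclideanSpace ℝ (Fin d) := xplus - u with hD
  set w : EuclideanSpace ℝ (Fin d) := z - xplus with hw
  have step : ∀ t : ℝ, 0 < t → t ≤ 1 →
      h xplus ≤ h z + 2 * c * ⟪D, w⟫ + c * t * ‖w‖ ^ 2 := by
    intro t ht0 ht1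
    have hy := hmin (xplus + t • w)
    have hconvy : h (xplus + t • w) ≤ (1 - t) * h xplus + t * h z := by
      have := hconv.2 (Set.mem_univ xplus) (Set.mem_univ z)
        (by linarith : (0:ℝ) ≤ 1 - t) ht0.le (by ring)
      have heq : (1 - t) • xplus + t • z = xplus + t • w := by
        rw [hw]; module
      rw [heq] at this
      simpa using this
    have hexp : ‖xplus + t • w - u‖ ^ 2 = ‖D‖ ^ 2 + 2 * t * ⟪D, w⟫ + t ^ 2 * ‖w‖ ^ 2 := by
      have : xplus + t • w - u = D + t • w := by rw [hD]; module
      rw [this, norm_add_sq_real, real_inner_smul_right, norm_smul]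
      simp [mul_pow]
      ring
    rw [hexp] at hy
    have := hy.trans (by linarith [hconvy] : h (xplus + t • w) +
      c * (‖D‖ ^ 2 + 2 * t * ⟪D, w⟫ + t ^ 2 * ‖w‖ ^ 2) ≤
      (1 - t) * h xplus + t * h z + c * (‖D‖ ^ 2 + 2 * t * ⟪D, w⟫ + t ^ 2 * ‖w‖ ^ 2))
    nlinarith
  have main : h xplus ≤ h z + 2 * c * ⟪D, w⟫ := by
    by_contra hcon
    push_neg at hcon
    set ε : ℝ := h xplus - (h z + 2 * c * ⟪D, w⟫) with hε
    have hε0 : 0 < ε := by rw [hε]; linarith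
    set t : ℝ := min 1 (ε / (2 * (c * ‖w‖ ^ 2 + 1))) with ht
    have ht0 : 0 < t := lt_min one_pos (by positivity)
    have ht1 : t ≤ 1 := min_le_left _ _
    have := step t ht0 ht1
    have h2 : c * t * ‖w‖ ^ 2 < ε := by
      have h3 : t ≤ ε / (2 * (c * ‖w‖ ^ 2 + 1)) := min_le_right _ _
      have h4 : c * t * ‖w‖ ^ 2 ≤ (c * ‖w‖ ^ 2 + 1) * (ε / (2 * (c * ‖w‖ ^ 2 + 1))) := by
        nlinarith [sq_nonneg ‖w‖, hc.le]
      have h5 : (c * ‖w‖ ^ 2 + 1) * (ε / (2 * (c * ‖w‖ ^ 2 + 1))) < ε := by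
        rw [mul_div_assoc', mul_comm, mul_div_assoc]
        have : (c * ‖w‖ ^ 2 + 1) / (2 * (c * ‖w‖ ^ 2 + 1)) < 1 := by
          rw [div_lt_one (by positivity)]
          nlinarith [sq_nonneg ‖w‖, hc]
        nlinarith
      linarith
    linarith
  have h2c : 2 * c = 1 / η := by rw [hcdef]; field_simp
  rw [h2c] at main
  exact main

theorem key_prox_descent_lemma {d : ℕ}
    (f h : EuclideanSpace ℝ (Fin d) → ℝ)
    (f' : EuclideanSpace ℝ (Fin d) → EuclideanSpace ℝ (Fin d)) (L : ℝ)
    (hdiff : ∀ x, HasGradientAt f (f' x) x)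
    (hLip : ∀ x y, ‖f' x - f' y‖ ≤ L * ‖x - y‖)
    (hconv : ConvexOn ℝ Set.univ h)
    (η : ℝ) (hη : 0 < η) (x v xplus : EuclideanSpace ℝ (Fin d))
    (hmin : ∀ y : EuclideanSpace ℝ (Fin d),
      h xplus + (1 / (2 * η)) * ‖xplus - (x - η • v)‖ ^ 2 ≤
        h y + (1 / (2 * η)) * ‖y - (x - η • v)‖ ^ 2) :
    ∀ z : EuclideanSpace ℝ (Fin d),
      f xplus + h xplus ≤ f z + h z + ⟪f' x - v, xplus - z⟫
        - (1 / η) * ⟪xplus - x, xplus - z⟫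
        + (L / 2) * ‖xplus - x‖ ^ 2 + (L / 2) * ‖z - x‖ ^ 2 := by
  intro z
  have d1 := abs_le.1 (descent_aux f f' L hdiff hLip x xplus)
  have d2 := abs_le.1 (descent_aux f f' L hdiff hLip x z)
  have p := prox_aux h hconv η hη (x - η • v) xplus z hmin
  have hinner : (1 / η) * ⟪xplus - (x - η • v), z - xplus⟫ =
      (1 / η) * ⟪xplus - x, z - xplus⟫ + ⟪v, z - xplus⟫ := by
    have heq : xplus - (x - η • v) = (xplus - x) + η • v := by module
    rw [heq, inner_add_left, real_inner_smul_left]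
    field_simp
  rw [hinner] at p
  have e1 : ⟪f' x - v, xplus - z⟫ =
      ⟪f' x, xplus - x⟫ - ⟪f' x, z - x⟫ - ⟪v, xplus - z⟫ := by
    simp only [inner_sub_left, inner_sub_right]; ring
  have e2 : ⟪v, z - xplus⟫ = -⟪v, xplus - z⟫ := by
    simp only [inner_sub_right]; ring
  have e3 : ⟪xplus - x, z - xplus⟫ = -⟪xplus - x, xplus - z⟫ := by
    simp only [inner_sub_right]; ring
  rw [e2, e3] at p
  linarith [d1.2, d2.1, p, e1]
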